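/- Let a and b be positive integers with gcd(a, b) = 1, and let l be any integer. Then Φ(ab, l) = Φ(a, bl) · Φ(b, al). -/

import Mathlib

open Complex Finset

/-- Normalized quadratic Gauss sum `Φ(a, b) = (1/√a) · Σ_{n=0}^{a−1} exp(πi n² b / a)`. -/
noncomputable def Phi (a b : ℤ) : ℂ :=
  ((Real.sqrt (a : ℝ) : ℝ) : ℂ)⁻¹ *
    ∑ n ∈ Finset.range a.toNat,
      Complex.exp (Real.pi * Complex.I * (n : ℂ) ^ 2 * (b : ℂ) / (a : ℂ))

lemma exp_period (N l : ℤ) (m n : ℤ) (hN : (N:ℂ) ≠ 0) (h2 : 2 ∣ N * l) (h : N ∣ m - n) :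
    Complex.exp (Real.pi * Complex.I * (m:ℂ)^2 * (l:ℂ) / (N:ℂ)) =
    Complex.exp (Real.pi * Complex.I * (n:ℂ)^2 * (l:ℂ) / (N:ℂ)) := by
  obtain ⟨k, hk⟩ := h
  obtain ⟨s, hs⟩ := h2
  have hm : (m:ℂ) = (n:ℂ) + (N:ℂ) * (k:ℂ) := by
    have : m = n + N * k := by linarith
    exact_mod_cast this
  have hsC : (N:ℂ) * (l:ℂ) = 2 * (s:ℂ) := by exact_mod_cast hs
  have key : Real.pi * Complex.I * (m:ℂ)^2 * (l:ℂ) / (N:ℂ)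
      = Real.pi * Complex.I * (n:ℂ)^2 * (l:ℂ) / (N:ℂ)
        + ((n*k*l + k^2*s : ℤ) : ℂ) * (2 * Real.pi * Complex.I) := by
    rw [hm]
    push_cast
    field_simp
    linear_combination ((k:ℂ)^2 * (N:ℂ)) * hsC
  rw [key, Complex.exp_add, Complex.exp_int_mul_two_pi_mul_I, mul_one]

lemma exp_split (a b l : ℤ) (x y : ℕ) (ha : 0 < a) (hb : 0 < b) :
    Complex.exp (Real.pi * Complex.I * (((b.toNat*x + a.toNat*y : ℕ)):ℂ)^2 * (l:ℂ) / (((a*b:ℤ)):ℂ))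
      = Complex.exp (Real.pi * Complex.I * (x:ℂ)^2 * ((b*l : ℤ):ℂ) / (a:ℂ)) *
        Complex.exp (Real.pi * Complex.I * (y:ℂ)^2 * ((a*l : ℤ):ℂ) / (b:ℂ)) := by
  have haC : (a:ℂ) ≠ 0 := by exact_mod_cast ha.ne'
  have hbC : (b:ℂ) ≠ 0 := by exact_mod_cast hb.ne'
  have hAa : (a.toNat:ℤ) = a := Int.toNat_of_nonneg ha.le
  have hBb : (b.toNat:ℤ) = b := Int.toNat_of_nonneg hb.le
  have hc : ((b.toNat*x + a.toNat*y : ℕ):ℂ) = (b:ℂ)*(x:ℂ) + (a:ℂ)*(y:ℂ) := by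
    have : ((b.toNat*x + a.toNat*y : ℕ):ℤ) = b*(x:ℤ) + a*(y:ℤ) := by
      push_cast
      rw [hAa, hBb]
    exact_mod_cast this
  have key : Real.pi * Complex.I * (((b.toNat*x + a.toNat*y : ℕ)):ℂ)^2 * (l:ℂ) / (((a*b:ℤ)):ℂ)
      = Real.pi * Complex.I * (x:ℂ)^2 * ((b*l : ℤ):ℂ) / (a:ℂ)
        + Real.pi * Complex.I * (y:ℂ)^2 * ((a*l : ℤ):ℂ) / (b:ℂ)
        + ((x*y*l : ℤ):ℂ) * (2 * Real.pi * Complex.I) := by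
    rw [hc]
    push_cast
    field_simp
    ring
  rw [key, Complex.exp_add, Complex.exp_add, Complex.exp_int_mul_two_pi_mul_I, mul_one]

lemma sum_reindex (a b l : ℤ) (ha : 0 < a) (hb : 0 < b) (hab : IsCoprime a b) (h2 : 2 ∣ a*b*l) :
    ∑ n ∈ Finset.range (a*b).toNat,
      Complex.exp (Real.pi * Complex.I * (n:ℂ)^2 * (l:ℂ) / (((a*b : ℤ)):ℂ)) =
    ∑ x ∈ Finset.range a.toNat, ∑ y ∈ Finset.range b.toNat,
      Complex.exp (Real.pi * Complex.I * (x:ℂ)^2 * ((b*l : ℤ):ℂ) / (a:ℂ)) *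
        Complex.exp (Real.pi * Complex.I * (y:ℂ)^2 * ((a*l : ℤ):ℂ) / (b:ℂ)) := by
  rw [← Finset.sum_product']
  have hAa : (a.toNat:ℤ) = a := Int.toNat_of_nonneg ha.le
  have hBb : (b.toNat:ℤ) = b := Int.toNat_of_nonneg hb.le
  set A := a.toNat
  set B := b.toNat
  have hABtoNat : (a*b).toNat = A * B := by
    have : ((a*b).toNat : ℤ) = ((A*B : ℕ) : ℤ) := by
      push_cast; rw [hAa, hBb, Int.toNat_of_nonneg (by positivity)]
    exact_mod_cast this
  have hApos : 0 < A := by omega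
  have hBpos : 0 < B := by omega
  have hABC : ((a*b : ℤ):ℂ) ≠ 0 := by
    push_cast
    exact mul_ne_zero (by exact_mod_cast ha.ne') (by exact_mod_cast hb.ne')
  set s : Finset (ℕ × ℕ) := Finset.range A ×ˢ Finset.range B with hs
  set g : ℕ × ℕ → ℕ := fun p => (B * p.1 + A * p.2) % (A * B) with hg
  -- injectivity on s
  have hinj : Set.InjOn g s := by
    intro p hp q hq hpq
    simp only [hs, Finset.coe_product, Set.mem_prod, Finset.mem_coe, Finset.mem_range] at hp hq
    have hmod : (B * p.1 + A * p.2) ≡ (B * q.1 + A * q.2) [MOD A*B] := hpq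
    have hdvd : ((A*B : ℕ):ℤ) ∣ ((B * q.1 + A * q.2 : ℕ):ℤ) - ((B * p.1 + A * p.2 : ℕ):ℤ) :=
      hmod.dvd
    have hdvd' : (a*b) ∣ (b * (q.1 - p.1 : ℤ) + a * (q.2 - p.2 : ℤ)) := by
      have := hdvd
      push_cast at this
      rw [hAa, hBb] at this
      convert this using 1
      push_cast
      ring
    have h1 : p.1 = q.1 := by
      have hda : a ∣ b * ((q.1 : ℤ) - p.1) := by
        have h3 : a ∣ b * ((q.1 : ℤ) - p.1) + a * ((q.2 : ℤ) - p.2) :=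
          (dvd_mul_right a b).trans hdvd'
        have h4 : a ∣ a * ((q.2 : ℤ) - p.2) := dvd_mul_right _ _
        simpa using dvd_sub h3 h4
      have := hab.dvd_of_dvd_mul_left hda
      have hz : (q.1 : ℤ) - p.1 = 0 := by
        refine Int.eq_zero_of_abs_lt_dvd this ?_
        rw [abs_lt]
        constructor <;> [skip; skip] <;> omega
      omega
    have h2' : p.2 = q.2 := by
      have hdb : b ∣ a * ((q.2 : ℤ) - p.2) := by
        have h3 : b ∣ b * ((q.1 : ℤ) - p.1) + a * ((q.2 : ℤ) - p.2) :=
          (dvd_mul_left b a).trans hdvd'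
        have h4 : b ∣ b * ((q.1 : ℤ) - p.1) := dvd_mul_right _ _
        have h5 := dvd_sub h3 h4
        have : b * ((q.1:ℤ) - ↑p.1) + a * ((q.2:ℤ) - ↑p.2) - b * ((q.1:ℤ) - ↑p.1)
            = a * ((q.2:ℤ) - ↑p.2) := by ring
        rwa [this] at h5
      have := hab.symm.dvd_of_dvd_mul_left hdb
      have hz : (q.2 : ℤ) - p.2 = 0 := by
        refine Int.eq_zero_of_abs_lt_dvd this ?_
        rw [abs_lt]
        constructor <;> omega
      omega
    exact Prod.ext h1 h2'
  -- image equals range (A*B)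
  have himg : s.image g = Finset.range (A*B) := by
    apply Finset.eq_of_subset_of_card_le
    · intro n hn
      simp only [Finset.mem_image] at hn
      obtain ⟨p, _, hp⟩ := hn
      rw [Finset.mem_range, ← hp]
      exact Nat.mod_lt _ (by positivity)
    · rw [Finset.card_range, Finset.card_image_of_injOn hinj, hs, Finset.card_product]
      simp
  rw [hABtoNat, ← himg, Finset.sum_image (fun p hp q hq => hinj hp hq)]
  apply Finset.sum_congr rfl
  intro p hp
  have hper : Complex.exp (Real.pi * Complex.I * ((g p : ℕ):ℂ)^2 * (l:ℂ) / (((a*b : ℤ)):ℂ))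
      = Complex.exp (Real.pi * Complex.I * (((B*p.1 + A*p.2 : ℕ)):ℂ)^2 * (l:ℂ) / (((a*b : ℤ)):ℂ)) := by
    have := exp_period (a*b) l (g p : ℤ) ((B*p.1 + A*p.2 : ℕ) : ℤ) hABC h2 ?_
    · exact_mod_cast this
    · have hnat : g p + (A*B) * ((B*p.1+A*p.2) / (A*B)) = B*p.1+A*p.2 :=
        Nat.mod_add_div _ _
      refine ⟨-(((B*p.1+A*p.2) / (A*B) : ℕ) : ℤ), ?_⟩
      have hc := congrArg (fun t : ℕ => (t : ℤ)) hnat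
      push_cast at hc
      rw [hAa, hBb] at hc
      push_cast
      rw [hAa, hBb]
      linarith [hc]
  rw [hper]
  exact exp_split a b l p.1 p.2 ha hb

lemma odd_sum (N c : ℤ) (hN : 0 < N) (hNo : Odd N) (hco : Odd c) :
    ∑ n ∈ Finset.range N.toNat,
      Complex.exp (Real.pi * Complex.I * (n:ℂ)^2 * (c:ℂ) / (N:ℂ)) = 1 := by
  set M := N.toNat with hM
  have hMN : (M:ℤ) = N := Int.toNat_of_nonneg hN.le
  have hM1 : 1 ≤ M := by omega
  have hsplit : Finset.range M = insert 0 (Finset.Ico 1 M) := by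
    ext x; simp [Finset.mem_range, Finset.mem_Ico]; omega
  rw [hsplit, Finset.sum_insert (by simp)]
  have h0 : Complex.exp (Real.pi * Complex.I * ((0:ℕ):ℂ)^2 * (c:ℂ) / (N:ℂ)) = 1 := by
    norm_num
  rw [h0]
  have hzero : ∑ n ∈ Finset.Ico 1 M,
      Complex.exp (Real.pi * Complex.I * (n:ℂ)^2 * (c:ℂ) / (N:ℂ)) = 0 := by
    apply Finset.sum_involution (fun n _ => M - n)
    · intro n hn
      simp only [Finset.mem_Ico] at hn
      -- f n + f (M - n) = 0
      have hcast : ((M - n : ℕ) : ℂ) = (N:ℂ) - (n:ℂ) := by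
        have : ((M - n : ℕ) : ℤ) = N - n := by omega
        exact_mod_cast this
      have hodd : Odd (N * c - 2 * n * c) := by
        rcases hNo with ⟨p, hp⟩; rcases hco with ⟨q, hq⟩
        exact ⟨2*p*q + p + q - n*c, by rw [hp, hq]; ring⟩
      obtain ⟨t, ht⟩ := hodd
      have hNC : (N:ℂ) ≠ 0 := by exact_mod_cast hN.ne'
      have key : Real.pi * Complex.I * ((M - n : ℕ):ℂ)^2 * (c:ℂ) / (N:ℂ)
          = Real.pi * Complex.I * (n:ℂ)^2 * (c:ℂ) / (N:ℂ)
            + ((t:ℤ):ℂ) * (2 * Real.pi * Complex.I) + Real.pi * Complex.I := by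
        rw [hcast]
        have htC : (N:ℂ) * c - 2 * n * c = 2 * t + 1 := by exact_mod_cast ht
        field_simp
        linear_combination (N:ℂ) * htC
      rw [key, Complex.exp_add, Complex.exp_add, Complex.exp_int_mul_two_pi_mul_I,
        Complex.exp_pi_mul_I]
      ring
    · intro n hn _
      simp only [Finset.mem_Ico] at hn
      have h2n : 2 * n ≠ M := by
        intro h
        have : Even N := by rw [← hMN, ← h]; exact ⟨n, by push_cast; ring⟩
        exact ((Int.not_odd_iff_even.mpr this)) hNo
      omega
    · intro n hn
      simp only [Finset.mem_Ico] at hn ⊢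
      omega
    · intro n hn
      simp only [Finset.mem_Ico] at hn
      omega
  rw [hzero, add_zero]

/-- Multiplicativity of the Gauss sum: for coprime positive `a`, `b` and any `l`,
`Φ(ab, l) = Φ(a, bl) · Φ(b, al)`. -/
theorem phi_mul (a b l : ℤ) (ha : 0 < a) (hb : 0 < b) (hab : IsCoprime a b) :
    Phi (a * b) l = Phi a (b * l) * Phi b (a * l) := by
  have hsqrt : ((Real.sqrt ((a*b : ℤ):ℝ) : ℝ):ℂ)⁻¹
      = ((Real.sqrt ((a : ℤ):ℝ) : ℝ):ℂ)⁻¹ * ((Real.sqrt ((b : ℤ):ℝ) : ℝ):ℂ)⁻¹ := by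
    have h1 : ((a*b : ℤ):ℝ) = ((a:ℤ):ℝ) * ((b:ℤ):ℝ) := by push_cast; ring
    rw [h1, Real.sqrt_mul (by positivity), Complex.ofReal_mul, mul_inv]
  unfold Phi
  rcases Int.even_or_odd (a*b*l) with he | ho
  · -- even case
    rw [sum_reindex a b l ha hb hab he.two_dvd]
    rw [hsqrt, ← Finset.sum_mul_sum]
    ring
  · -- odd case
    have habl := Int.odd_mul.mp ho
    have hab' := Int.odd_mul.mp habl.1
    rw [odd_sum (a*b) l (by positivity) habl.1 habl.2,
      odd_sum a (b*l) ha hab'.1 (Int.odd_mul.mpr ⟨hab'.2, habl.2⟩),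
      odd_sum b (a*l) hb hab'.2 (Int.odd_mul.mpr ⟨hab'.1, habl.2⟩),
      hsqrt]
    ring
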